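/- The identity V_{n,m} = Z_{n,m-1} holds, where V_{n,m} = Σ_{x ∈ ℕ^n, |x|_1 = m} (Σ_{i: x_i ≥ 1} μ_i) Π_{j=1}^n (p_j/μ_j)^{x_j} and Z_{n,m-1} = Σ_{y ∈ ℕ^n, |y|_1 = m-1} Π_{j=1}^n (p_j/μ_j)^{y_j}, provided Σ_{i=1}^n p_i = 1. -/
import Mathlib


open Finset

/-- Normalizing constant `Z_{n,μm} = Σ_{x ∈ ℕ^n, |x|₁ = μm} Π_j (p j / μ j)^(x j)`. -/
noncomputable def Zconst (n : ℕ) (p μ : Fin n → ℝ) (μm : ℕ) : ℝ :=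
  ∑ x ∈ Finset.Nat.antidiagonalTuple n μm, ∏ j, (p j / μ j) ^ (x j)

/-- `V_{n,m} = Z_{n,m-1}` when `Σ_i p_i = 1`, where
`V_{n,m} = Σ_{|x|₁=m} (Σ_{i : x_i ≥ 1} μ_i) Π_j (p_j/μ_j)^{x_j}`. -/
theorem V_eq_Z (n m : ℕ) (hn : 1 ≤ n) (hm : 1 ≤ m)
    (p μ : Fin n → ℝ) (hp : ∀ i, 0 < p i) (hμ : ∀ i, 0 < μ i)
    (hsum : ∑ i, p i = 1) :
    ∑ x ∈ Finset.Nat.antidiagonalTuple n m,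
        (∑ i ∈ Finset.univ.filter (fun i => 1 ≤ x i), μ i) * ∏ j, (p j / μ j) ^ (x j)
      = Zconst n p μ (m - 1) := by
  classical
  have key : ∀ i : Fin n,
      ∑ x ∈ (Finset.Nat.antidiagonalTuple n m).filter (fun x => 1 ≤ x i),
        ∏ j, (p j / μ j) ^ (x j)
      = (p i / μ i) * Zconst n p μ (m - 1) := by
    intro i
    rw [Zconst, Finset.mul_sum]
    refine Finset.sum_nbij' (fun x : Fin n → ℕ => x - Pi.single i 1) (fun y : Fin n → ℕ => y + Pi.single i 1)
      ?_ ?_ ?_ ?_ ?_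
    · intro x hx
      simp only [Finset.mem_filter, Finset.Nat.mem_antidiagonalTuple] at hx ⊢
      obtain ⟨hs, hxi⟩ := hx
      have hxeq : (x - Pi.single i 1) + Pi.single i 1 = x := by
        funext j
        rcases eq_or_ne j i with rfl | hj
        · simp [Pi.single_apply]; omega
        · simp [Pi.single_apply, hj]
      have : ∑ j, x j = (∑ j, (x - Pi.single i 1 : Fin n → ℕ) j) + 1 := by
        conv_lhs => rw [← hxeq]
        simp [Finset.sum_add_distrib, Pi.single_apply]
      omega
    · intro y hy
      rw [Finset.Nat.mem_antidiagonalTuple] at hy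
      simp only [Finset.mem_filter, Finset.Nat.mem_antidiagonalTuple]
      constructor
      · have : ∑ j, (y + Pi.single i 1 : Fin n → ℕ) j = (∑ j, y j) + 1 := by
          simp [Finset.sum_add_distrib, Pi.single_apply]
        rw [this, hy]
        omega
      · simp [Pi.single_apply]
    · intro x hx
      simp only [Finset.mem_filter] at hx
      funext j
      rcases eq_or_ne j i with rfl | hj
      · simp [Pi.single_apply]; omega
      · simp [Pi.single_apply, hj]
    · intro y hy
      funext j
      rcases eq_or_ne j i with rfl | hj
      · simp [Pi.single_apply]
      · simp [Pi.single_apply, hj]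
    · intro x hx
      simp only [Finset.mem_filter] at hx
      obtain ⟨hs, hxi⟩ := hx
      beta_reduce
      rw [← Finset.mul_prod_erase _ _ (Finset.mem_univ i),
          ← Finset.mul_prod_erase _ _ (Finset.mem_univ i)]
      simp only [Pi.sub_apply, Pi.single_eq_same]
      have h2 : ∀ j ∈ Finset.univ.erase i,
          (p j / μ j) ^ (x j - (Pi.single i 1 : Fin n → ℕ) j) = (p j / μ j) ^ (x j) := by
        intro j hj
        have hji : j ≠ i := Finset.ne_of_mem_erase hj
        simp [Pi.single_apply, hji]
      have hq : x i - 1 + 1 = x i := by omega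
      rw [Finset.prod_congr rfl h2, ← mul_assoc, ← pow_succ', hq]
  calc
    ∑ x ∈ Finset.Nat.antidiagonalTuple n m,
        (∑ i ∈ Finset.univ.filter (fun i => 1 ≤ x i), μ i) * ∏ j, (p j / μ j) ^ (x j)
      = ∑ x ∈ Finset.Nat.antidiagonalTuple n m, ∑ i : Fin n,
          (if 1 ≤ x i then μ i * ∏ j, (p j / μ j) ^ (x j) else 0) := by
        refine Finset.sum_congr rfl fun x _ => ?_
        rw [Finset.sum_mul, Finset.sum_filter]
    _ = ∑ i : Fin n, ∑ x ∈ Finset.Nat.antidiagonalTuple n m,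
          (if 1 ≤ x i then μ i * ∏ j, (p j / μ j) ^ (x j) else 0) := Finset.sum_comm
    _ = ∑ i : Fin n, μ i * ((p i / μ i) * Zconst n p μ (m - 1)) := by
        refine Finset.sum_congr rfl fun i _ => ?_
        rw [← Finset.sum_filter, ← Finset.mul_sum, key i]
    _ = Zconst n p μ (m - 1) := by
        have : ∀ i : Fin n, μ i * ((p i / μ i) * Zconst n p μ (m - 1)) = p i * Zconst n p μ (m - 1) := by
          intro i
          rw [← mul_assoc, mul_div_assoc', mul_div_cancel_left₀ _ (hμ i).ne']
        simp_rw [this, ← Finset.sum_mul, hsum, one_mul]
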